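/- Suppose Ĝ: ℝ^m → ℝ^m satisfies the approximate co-coercivity ⟨f − f̂, Ĝ(f) − Ĝ(f̂)⟩ ≥ (1/ℓ)‖Ĝ(f) − Ĝ(f̂)‖₂² − (1/ℓ)ε² for all f, where f̂ is a fixed point of the map T(f) = Prox_η(f − η Ĝ(f)) with η = 1/ℓ and Prox_η the proximal operator of a convex function. Then the Picard iterates f^{k+1} = T(f^k) satisfy min_{0 ≤ k ≤ K} ‖T(f^k) − f^k‖₂² ≤ (2/(K+1))‖f^0 − f̂‖₂² + 4ε²/ℓ². -/

import Mathlib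

lemma prox_subgrad {m : ℕ} (Φ : EuclideanSpace ℝ (Fin m) → ℝ)
    (hΦ : ConvexOn ℝ Set.univ Φ) (η : ℝ) (hη : 0 < η)
    (P : EuclideanSpace ℝ (Fin m) → EuclideanSpace ℝ (Fin m))
    (hP : ∀ u f, 1 / (2 * η) * ‖u - P u‖ ^ 2 + Φ (P u)
        ≤ 1 / (2 * η) * ‖u - f‖ ^ 2 + Φ f)
    (u q : EuclideanSpace ℝ (Fin m)) :
    η * (Φ (P u) - Φ q) ≤ (inner ℝ (u - P u) (P u - q) : ℝ) := by
  set p := P u with hp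
  set ip := (inner ℝ (u - p) (p - q) : ℝ) with hip
  set N := ‖p - q‖ ^ 2 with hNdef
  have hN : 0 ≤ N := by positivity
  have key : ∀ t : ℝ, 0 < t → t ≤ 1 →
      t * (η * (Φ p - Φ q)) ≤ t * ip + t ^ 2 * (N / 2) := by
    intro t ht0 ht1
    have h1t : (0:ℝ) ≤ 1 - t := by linarith
    have hconv := hΦ.2 (Set.mem_univ p) (Set.mem_univ q) h1t ht0.le (by ring)
    have hmain := hP u ((1 - t) • p + t • q)
    rw [← hp] at hmain
    have hvec : u - ((1 - t) • p + t • q) = (u - p) + t • (p - q) := by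
      rw [sub_smul, one_smul, smul_sub]; abel
    have hexp : ‖(u - p) + t • (p - q)‖ ^ 2
        = ‖u - p‖ ^ 2 + 2 * t * ip + t ^ 2 * N := by
      rw [norm_add_sq_real, real_inner_smul_right, norm_smul, Real.norm_eq_abs,
        abs_of_pos ht0, hNdef]
      ring
    rw [hvec, hexp] at hmain
    have hsplit : 1 / (2*η) * (‖u - p‖ ^ 2 + 2 * t * ip + t ^ 2 * N)
        = 1 / (2*η) * ‖u - p‖ ^ 2 + 1 / (2*η) * (2 * t * ip + t ^ 2 * N) := by ring
    rw [hsplit] at hmain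
    have smul_eq : (1 - t) * Φ p + t * Φ q = Φ ((1-t) • p + t • q) ∨ True := Or.inr trivial
    have h3 : t * Φ p - t * Φ q ≤ 1 / (2*η) * (2 * t * ip + t ^ 2 * N) := by
      have := hconv
      simp only [smul_eq_mul] at this
      linarith
    have h4 := mul_le_mul_of_nonneg_left h3 hη.le
    have h5 : η * (1 / (2*η) * (2 * t * ip + t ^ 2 * N)) = t * ip + t ^ 2 * (N / 2) := by
      field_simp
    rw [h5] at h4
    linarith [h4]
  apply le_of_forall_pos_le_add
  intro δ hδ
  set t := min 1 (2 * δ / (N + 1)) with htdef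
  have ht0 : 0 < t := lt_min one_pos (by positivity)
  have ht1 : t ≤ 1 := min_le_left _ _
  have hk := key t ht0 ht1
  have h6 : t * (η * (Φ p - Φ q)) ≤ t * (ip + t * (N / 2)) := by nlinarith [hk]
  have h7 : η * (Φ p - Φ q) ≤ ip + t * (N / 2) := le_of_mul_le_mul_left (by linarith [h6]) ht0
  have h8 : t ≤ 2 * δ / (N + 1) := min_le_right _ _
  have h9 : t * (N + 1) ≤ 2 * δ := by
    rw [← le_div_iff₀ (by positivity : (0:ℝ) < N + 1)]
    exact h8
  have h10 : t * N ≤ 2 * δ := by nlinarith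
  linarith

lemma prox_firm {m : ℕ} (Φ : EuclideanSpace ℝ (Fin m) → ℝ)
    (hΦ : ConvexOn ℝ Set.univ Φ) (η : ℝ) (hη : 0 < η)
    (P : EuclideanSpace ℝ (Fin m) → EuclideanSpace ℝ (Fin m))
    (hP : ∀ u f, 1 / (2 * η) * ‖u - P u‖ ^ 2 + Φ (P u)
        ≤ 1 / (2 * η) * ‖u - f‖ ^ 2 + Φ f)
    (u v : EuclideanSpace ℝ (Fin m)) :
    ‖P u - P v‖ ^ 2 ≤ (inner ℝ (u - v) (P u - P v) : ℝ) := by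
  have h1 := prox_subgrad Φ hΦ η hη P hP u (P v)
  have h2 := prox_subgrad Φ hΦ η hη P hP v (P u)
  have hid : (inner ℝ (u - v) (P u - P v) : ℝ) - ‖P u - P v‖ ^ 2
      = (inner ℝ (u - P u) (P u - P v) : ℝ) + (inner ℝ (v - P v) (P v - P u) : ℝ) := by
    rw [← real_inner_self_eq_norm_sq]
    simp only [inner_sub_left, inner_sub_right]
    linarith [real_inner_comm (P v) (P u), real_inner_comm v (P u),
      real_inner_comm (P v) u, real_inner_comm u (P v), real_inner_comm v (P v),
      real_inner_comm u (P u)]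
  linarith

lemma step_ineq {m : ℕ} (Φ : EuclideanSpace ℝ (Fin m) → ℝ)
    (hΦ : ConvexOn ℝ Set.univ Φ)
    (G : EuclideanSpace ℝ (Fin m) → EuclideanSpace ℝ (Fin m))
    (ε : ℝ) (η : ℝ) (hη : 0 < η)
    (P : EuclideanSpace ℝ (Fin m) → EuclideanSpace ℝ (Fin m))
    (hP : ∀ u f, 1 / (2 * η) * ‖u - P u‖ ^ 2 + Φ (P u)
        ≤ 1 / (2 * η) * ‖u - f‖ ^ 2 + Φ f)
    (fhat : EuclideanSpace ℝ (Fin m))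
    (hfix : P (fhat - η • G fhat) = fhat)
    (hco : ∀ f, η * ‖G f - G fhat‖ ^ 2 - η * ε ^ 2
        ≤ (inner ℝ (f - fhat) (G f - G fhat) : ℝ))
    (f : EuclideanSpace ℝ (Fin m)) :
    ‖P (f - η • G f) - fhat‖ ^ 2
      ≤ ‖f - fhat‖ ^ 2 - (1/2) * ‖P (f - η • G f) - f‖ ^ 2 + 2 * ε ^ 2 * η ^ 2 := by
  set p := P (f - η • G f) - fhat with hpdef
  set a := f - fhat with hadef
  set b := G f - G fhat with hbdef
  have hfirm := prox_firm Φ hΦ η hη P hP (f - η • G f) (fhat - η • G fhat)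
  rw [hfix] at hfirm
  have huv : (f - η • G f) - (fhat - η • G fhat) = a - η • b := by
    rw [hadef, hbdef, smul_sub]; abel
  rw [huv] at hfirm
  have hF1 : ‖p‖ ^ 2 ≤ (inner ℝ a p : ℝ) - η * (inner ℝ b p : ℝ) := by
    have : (inner ℝ (a - η • b) p : ℝ) = (inner ℝ a p : ℝ) - η * (inner ℝ b p : ℝ) := by
      rw [inner_sub_left, real_inner_smul_left]
    rw [this] at hfirm
    exact hfirm
  have hF2 : η * ‖b‖ ^ 2 - η * ε ^ 2 ≤ (inner ℝ a b : ℝ) := hco f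
  have hpa : P (f - η • G f) - f = p - a := by rw [hpdef, hadef]; abel
  rw [hpa]
  have hF3 : (inner ℝ a b : ℝ) - (inner ℝ b p : ℝ) ≤ ‖b‖ * ‖p - a‖ := by
    have hc := abs_real_inner_le_norm b (p - a)
    have : (inner ℝ b (p - a) : ℝ) = (inner ℝ b p : ℝ) - (inner ℝ a b : ℝ) := by
      rw [inner_sub_right, real_inner_comm a b]
    rw [this] at hc
    linarith [abs_le.mp hc |>.1]
  have hF4 : ‖p - a‖ ^ 2 = ‖p‖ ^ 2 - 2 * (inner ℝ a p : ℝ) + ‖a‖ ^ 2 := by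
    rw [norm_sub_sq_real, real_inner_comm p a]
  have hyoung : 0 ≤ (η * ‖b‖ - ‖p - a‖ / 2) ^ 2 := sq_nonneg _
  nlinarith [mul_le_mul_of_nonneg_left hF2 hη.le, mul_le_mul_of_nonneg_left hF3 hη.le]


/-- Sublinear convergence of the defect along Picard iterates of the approximate
proximal gradient update, under approximate co-coercivity at a fixed point. -/
theorem picard_defect_sublinear (m : ℕ)
    (Φ : EuclideanSpace ℝ (Fin m) → ℝ)
    (hΦ : ConvexOn ℝ Set.univ Φ)
    (G : EuclideanSpace ℝ (Fin m) → EuclideanSpace ℝ (Fin m))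
    (ℓ ε : ℝ) (hℓ : 0 < ℓ) (hε : 0 ≤ ε) (η : ℝ) (hηdef : η = 1 / ℓ)
    (P : EuclideanSpace ℝ (Fin m) → EuclideanSpace ℝ (Fin m))
    (hP : ∀ u f, 1 / (2 * η) * ‖u - P u‖ ^ 2 + Φ (P u)
        ≤ 1 / (2 * η) * ‖u - f‖ ^ 2 + Φ f)
    (fhat : EuclideanSpace ℝ (Fin m))
    (hfix : P (fhat - η • G fhat) = fhat)
    (hco : ∀ f, (1 / ℓ) * ‖G f - G fhat‖ ^ 2 - (1 / ℓ) * ε ^ 2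
        ≤ (inner ℝ (f - fhat) (G f - G fhat) : ℝ))
    (seq : ℕ → EuclideanSpace ℝ (Fin m))
    (hseq : ∀ k, seq (k + 1) = P (seq k - η • G (seq k))) :
    ∀ K : ℕ, ∃ k ≤ K,
      ‖P (seq k - η • G (seq k)) - seq k‖ ^ 2
        ≤ 2 / ((K : ℝ) + 1) * ‖seq 0 - fhat‖ ^ 2 + 4 * ε ^ 2 / ℓ ^ 2 := by
  intro K
  have hη : 0 < η := by rw [hηdef]; positivity
  have hco' : ∀ f, η * ‖G f - G fhat‖ ^ 2 - η * ε ^ 2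
      ≤ (inner ℝ (f - fhat) (G f - G fhat) : ℝ) := by
    intro f; rw [hηdef]; exact hco f
  have hstep : ∀ k, ‖seq (k+1) - fhat‖ ^ 2
      ≤ ‖seq k - fhat‖ ^ 2 - (1/2) * ‖seq (k+1) - seq k‖ ^ 2 + 2 * ε ^ 2 / ℓ ^ 2 := by
    intro k
    have h := step_ineq Φ hΦ G ε η hη P hP fhat hfix hco' (seq k)
    rw [← hseq k] at h
    have : 2 * ε ^ 2 * η ^ 2 = 2 * ε ^ 2 / ℓ ^ 2 := by
      rw [hηdef]; field_simp
    linarith [h, this.ge, this.le]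
  by_contra hcon
  push_neg at hcon
  set r0 := ‖seq 0 - fhat‖ ^ 2 with hr0
  set q : ℝ := r0 / ((K : ℝ) + 1) with hq
  have hK1 : (0:ℝ) < (K : ℝ) + 1 := by positivity
  have hd : ∀ k ≤ K, ‖seq (k+1) - seq k‖ ^ 2 > 2 * q + 4 * ε ^ 2 / ℓ ^ 2 := by
    intro k hk
    have := hcon k hk
    rw [hseq k]
    have hq2 : 2 / ((K : ℝ) + 1) * r0 = 2 * q := by rw [hq]; ring
    linarith
  have hind : ∀ n, n ≤ K → ‖seq (n+1) - fhat‖ ^ 2 < r0 - ((n:ℝ) + 1) * q := by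
    intro n
    induction n with
    | zero =>
      intro h0
      have h1 := hstep 0
      have h2 := hd 0 h0
      norm_num at h1 h2 ⊢
      linarith [hr0, (by ring : 4 * ε^2/ℓ^2 = 2*(2*ε^2/ℓ^2))]
    | succ n ih =>
      intro hn
      have hn' : n ≤ K := Nat.le_of_succ_le hn
      have h1 := hstep (n+1)
      have h2 := hd (n+1) hn
      have h3 := ih hn'
      push_cast at h3 ⊢
      linarith [hr0, (by ring : 4 * ε^2/ℓ^2 = 2*(2*ε^2/ℓ^2))]
  have hfin := hind K le_rfl
  have : ((K:ℝ) + 1) * q = r0 := by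
    rw [hq]; field_simp
  nlinarith [sq_nonneg ‖seq (K+1) - fhat‖, norm_nonneg (seq (K+1) - fhat)]
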